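/- Let U be a free (nonprincipal) ultrafilter on ℕ and let (μ_n)_{n∈ℕ} be Borel probability measures on ℝ such that for every bounded continuous f : ℝ → ℝ and every L ∈ ℝ, if the sequence k ↦ f(k) tends to L along U then ∫ f dμ_n → L as n → ∞. Then for every integer k ≥ 1 and every real d with 0 < d < 1, μ_n([k − d, k + d]) → 0 as n → ∞. -/

import Mathlib

open MeasureTheory Filter Topology

/-- first intermediate claim in Example 5.11: if the Borel probability measures
`μ n` on `ℝ` converge weakly (against bounded continuous functions) to the charge determined
by the free ultrafilter `U`, then `μ n [k - d, k + d] → 0` for every integer `k ≥ 1` and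
every `0 < d < 1`. -/
theorem tendsto_measure_Icc_zero_of_weak_limit_ultrafilter_charge
    (U : Ultrafilter ℕ) (hU : (U : Filter ℕ) ≤ Filter.cofinite)
    (μ : ℕ → Measure ℝ) (hprob : ∀ n, IsProbabilityMeasure (μ n))
    (hconv : ∀ f : ℝ → ℝ, Continuous f → (∃ C : ℝ, ∀ x, |f x| ≤ C) →
      ∀ L : ℝ, Tendsto (fun k : ℕ => f k) (U : Filter ℕ) (𝓝 L) →
        Tendsto (fun n => ∫ x, f x ∂(μ n)) atTop (𝓝 L)) :
    ∀ k : ℕ, 1 ≤ k → ∀ d : ℝ, 0 < d → d < 1 →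
      Tendsto (fun n => μ n (Set.Icc ((k : ℝ) - d) ((k : ℝ) + d))) atTop (𝓝 0) := by
  intro k hk d hd hd1
  set c : ℝ := (1 + d) / 2 with hc
  have hdc : d < c := by rw [hc]; linarith
  have hc1 : c < 1 := by rw [hc]; linarith
  have hcd : 0 < c - d := by linarith
  set S : Set ℝ := Set.Icc ((k : ℝ) - d) ((k : ℝ) + d) with hS
  set f : ℝ → ℝ := fun x => max 0 (min 1 ((c - |x - k|) / (c - d))) with hf
  have hfcont : Continuous f := by
    apply Continuous.max continuous_const
    apply Continuous.min continuous_const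
    exact (Continuous.sub continuous_const ((continuous_id.sub continuous_const).abs)).div_const _
  have hf0 : ∀ x, 0 ≤ f x := fun x => le_max_left _ _
  have hf1 : ∀ x, f x ≤ 1 := fun x => max_le zero_le_one (min_le_left _ _)
  -- f vanishes when |x - k| ≥ c
  have hvanish : ∀ x : ℝ, c ≤ |x - k| → f x = 0 := by
    intro x hx
    have ht : (c - |x - k|) / (c - d) ≤ 0 :=
      div_nonpos_of_nonpos_of_nonneg (by linarith) (le_of_lt hcd)
    have : min 1 ((c - |x - k|) / (c - d)) ≤ 0 := le_trans (min_le_right _ _) ht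
    simpa [hf] using max_eq_left this
  -- f = 1 on S
  have hone : ∀ x ∈ S, f x = 1 := by
    intro x hx
    rw [hS] at hx
    have habs : |x - k| ≤ d := by
      rw [abs_le]; constructor <;> [linarith [hx.1]; linarith [hx.2]]
    have ht : 1 ≤ (c - |x - k|) / (c - d) := by
      rw [le_div_iff₀ hcd]; linarith
    have : min 1 ((c - |x - k|) / (c - d)) = 1 := min_eq_left ht
    simp [hf, this]
  -- f n = 0 for all naturals n ≠ k
  have hnat : ∀ n : ℕ, n ≠ k → f n = 0 := by
    intro n hn
    apply hvanish
    have : ((n : ℝ) - k) = ((n : ℤ) - (k : ℤ) : ℤ) := by push_cast; ring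
    rw [this]
    have h1 : (1 : ℤ) ≤ |(n : ℤ) - (k : ℤ)| :=
      Int.one_le_abs (sub_ne_zero.mpr (by exact_mod_cast hn))
    calc c ≤ 1 := le_of_lt hc1
      _ ≤ |(((n : ℤ) - (k : ℤ) : ℤ) : ℝ)| := by
          rw [← Int.cast_abs]; exact_mod_cast h1
  -- f tends to 0 along U
  have hUlim : Tendsto (fun n : ℕ => f n) (U : Filter ℕ) (𝓝 0) := by
    have hev : ∀ᶠ n : ℕ in (U : Filter ℕ), f (n : ℝ) = 0 := by
      apply hU
      rw [Filter.mem_cofinite]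
      apply Set.Finite.subset (Set.finite_singleton k)
      intro n hn
      simp only [Set.mem_compl_iff, Set.mem_setOf_eq] at hn
      by_contra hne
      exact hn (hnat n (by simpa using hne))
    exact Tendsto.congr' (Filter.EventuallyEq.symm hev) tendsto_const_nhds
  have hint : Tendsto (fun n => ∫ x, f x ∂(μ n)) atTop (𝓝 0) :=
    hconv f hfcont ⟨1, fun x => abs_le.mpr ⟨by linarith [hf0 x], hf1 x⟩⟩ 0 hUlim
  -- f has compact support
  have hsupp : HasCompactSupport f := by
    apply HasCompactSupport.intro (isCompact_Icc (a := (k : ℝ) - c) (b := (k : ℝ) + c))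
    intro x hx
    apply hvanish
    rw [Set.mem_Icc, not_and_or] at hx
    rcases hx with h | h <;> rw [le_abs] <;> [right; left] <;> push_neg at h <;> linarith
  -- integral bound
  have hbound : ∀ n, μ n S ≤ ENNReal.ofReal (∫ x, f x ∂(μ n)) := by
    intro n
    haveI := hprob n
    have hfint : Integrable f (μ n) := hfcont.integrable_of_hasCompactSupport hsupp
    have hSm : MeasurableSet S := measurableSet_Icc
    have hind : ∀ x, S.indicator (fun _ => (1 : ℝ)) x ≤ f x := by
      intro x
      by_cases hx : x ∈ S
      · rw [Set.indicator_of_mem hx, hone x hx]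
      · rw [Set.indicator_of_notMem hx]; exact hf0 x
    have hiind : Integrable (S.indicator (fun _ => (1 : ℝ))) (μ n) :=
      (integrable_const (1 : ℝ)).indicator hSm
    have h1 : ∫ x, S.indicator (fun _ => (1 : ℝ)) x ∂(μ n) = (μ n S).toReal := by
      rw [integral_indicator_const _ hSm]; simp; rfl
    have h2 : (μ n S).toReal ≤ ∫ x, f x ∂(μ n) := by
      rw [← h1]; exact integral_mono hiind hfint hind
    calc μ n S = ENNReal.ofReal (μ n S).toReal := by
          rw [ENNReal.ofReal_toReal (measure_ne_top _ _)]
      _ ≤ ENNReal.ofReal (∫ x, f x ∂(μ n)) := ENNReal.ofReal_le_ofReal h2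
  -- squeeze
  have hupper : Tendsto (fun n => ENNReal.ofReal (∫ x, f x ∂(μ n))) atTop (𝓝 0) := by
    have := ENNReal.tendsto_ofReal hint
    simpa using this
  exact tendsto_of_tendsto_of_tendsto_of_le_of_le tendsto_const_nhds hupper
    (fun n => zero_le) hbound
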